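/- arXiv:0901.4515 — 7 statements merged into one kernel-verified Lean document; each statement's English description precedes it below -/
import Mathlib

section
/- For density matrices ρ, ρ_d evolving under dρ/dt = −i[H₀ + f·H₁, ρ] and dρ_d/dt = −i[H₀, ρ_d] with f = Tr([−iH₁, ρ]ρ_d), the time derivative of V = Tr(ρ_d²) − Tr(ρ·ρ_d) equals −f², hence is ≤ 0. -/
open Matrix

lemma hasDerivAt_trace_mul' {n : ℕ} (A B : ℝ → Matrix (Fin n) (Fin n) ℂ)
    (A' B' : Matrix (Fin n) (Fin n) ℂ) (t : ℝ)
    (hA : ∀ i j, HasDerivAt (fun s => A s i j) (A' i j) t)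
    (hB : ∀ i j, HasDerivAt (fun s => B s i j) (B' i j) t) :
    HasDerivAt (fun s => (A s * B s).trace)
      ((A' * B t).trace + (A t * B').trace) t := by
  have h : ∀ s, (A s * B s).trace = ∑ i, ∑ j, A s i j * B s j i := by
    intro s; simp [Matrix.trace, Matrix.mul_apply, Matrix.diag]
  simp only [h]
  have : (A' * B t).trace + (A t * B').trace
      = ∑ i, ∑ j, (A' i j * B t j i + A t i j * B' j i) := by
    simp [Matrix.trace, Matrix.mul_apply, Matrix.diag, Finset.sum_add_distrib]
  rw [this]
  apply HasDerivAt.fun_sum; intro i _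
  apply HasDerivAt.fun_sum; intro j _
  exact (hA i j).mul (hB j i)

lemma key_trace_identity {n : ℕ} (H₀ H₁ R S : Matrix (Fin n) (Fin n) ℂ) (c : ℂ)
    (hc : c = ((((-Complex.I) • H₁) * R - R * ((-Complex.I) • H₁)) * S).trace) :
    ((((-Complex.I) • (H₀ * S - S * H₀)) * S).trace + (S * ((-Complex.I) • (H₀ * S - S * H₀))).trace)
    - ((((-Complex.I) • ((H₀ + c • H₁) * R - R * (H₀ + c • H₁))) * S).trace
       + (R * ((-Complex.I) • (H₀ * S - S * H₀))).trace) = -c ^ 2 := by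
  simp only [smul_mul_assoc, mul_smul_comm, sub_mul, mul_sub, add_mul, mul_add,
    smul_sub, smul_add, trace_smul, trace_sub, trace_add, mul_assoc, smul_eq_mul] at *
  have e1 : (S * (S * H₀)).trace = (H₀ * (S * S)).trace := by
    rw [← mul_assoc, trace_mul_comm]
  have e2 : (R * (S * H₀)).trace = (H₀ * (R * S)).trace := by
    rw [← mul_assoc, trace_mul_comm]
  rw [e1, e2]
  linear_combination c * hc

lemma f_real {n : ℕ} (H₁ R S : Matrix (Fin n) (Fin n) ℂ)
    (hH₁ : H₁.IsHermitian) (hR : R.IsHermitian) (hS : S.IsHermitian) :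
    (starRingEnd ℂ) (((((-Complex.I) • H₁) * R - R * ((-Complex.I) • H₁)) * S).trace)
      = ((((-Complex.I) • H₁) * R - R * ((-Complex.I) • H₁)) * S).trace := by
  have h := Matrix.trace_conjTranspose (((((-Complex.I) • H₁) * R - R * ((-Complex.I) • H₁)) * S))
  rw [show (star (((((-Complex.I) • H₁) * R - R * ((-Complex.I) • H₁)) * S).trace) : ℂ)
      = (starRingEnd ℂ) (((((-Complex.I) • H₁) * R - R * ((-Complex.I) • H₁)) * S).trace) from rfl] at h
  rw [← h]
  simp only [conjTranspose_mul, conjTranspose_sub, conjTranspose_smul, hH₁.eq, hR.eq, hS.eq,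
    star_neg, Complex.star_def, Complex.conj_I, neg_neg]
  simp only [smul_mul_assoc, mul_smul_comm, sub_mul, mul_sub, trace_smul, trace_sub,
    mul_assoc, smul_eq_mul]
  have e1 : (S * (R * H₁)).trace = (R * (H₁ * S)).trace := by
    rw [trace_mul_comm, mul_assoc]
  have e2 : (S * (H₁ * R)).trace = (H₁ * (R * S)).trace := by
    rw [trace_mul_comm, mul_assoc]
  rw [e1, e2]; ring

theorem stmt_2 {n : ℕ} (H₀ H₁ : Matrix (Fin n) (Fin n) ℂ)
    (hH₀ : H₀.IsHermitian) (hH₁ : H₁.IsHermitian)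
    (ρ ρd : ℝ → Matrix (Fin n) (Fin n) ℂ)
    (hherm : ∀ t, (ρ t).IsHermitian) (hhermd : ∀ t, (ρd t).IsHermitian)
    (f : ℝ → ℂ)
    (hf : ∀ t, f t = ((((-Complex.I) • H₁) * ρ t - ρ t * ((-Complex.I) • H₁)) * ρd t).trace)
    (hρ : ∀ t i j, HasDerivAt (fun s => ρ s i j)
      (((-Complex.I) • ((H₀ + f t • H₁) * ρ t - ρ t * (H₀ + f t • H₁))) i j) t)
    (hρd : ∀ t i j, HasDerivAt (fun s => ρd s i j)
      (((-Complex.I) • (H₀ * ρd t - ρd t * H₀)) i j) t)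
    (V : ℝ → ℂ) (hV : ∀ t, V t = (ρd t * ρd t).trace - (ρ t * ρd t).trace)
    (t : ℝ) :
    HasDerivAt V (-(f t) ^ 2) t ∧ (-(f t) ^ 2).re ≤ 0 := by
  constructor
  · have hVfun : V = fun s => (ρd s * ρd s).trace - (ρ s * ρd s).trace := funext hV
    rw [hVfun]
    have h1 := hasDerivAt_trace_mul' ρd ρd _ _ t (hρd t) (hρd t)
    have h2 := hasDerivAt_trace_mul' ρ ρd _ _ t (hρ t) (hρd t)
    have h3 := h1.sub h2
    have := key_trace_identity H₀ H₁ (ρ t) (ρd t) (f t) (hf t)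
    rw [this] at h3
    exact h3
  · have hr := f_real H₁ (ρ t) (ρd t) hH₁ (hherm t) (hhermd t)
    rw [← hf t] at hr
    have him : (f t).im = 0 := Complex.conj_eq_iff_im.mp hr
    have : (-(f t) ^ 2).re = -((f t).re ^ 2) := by
      simp [pow_two, Complex.mul_re, him]
    rw [this]
    exact neg_nonpos.mpr (sq_nonneg _)
end

section
/- Let ρ₁, ρ₂ be n×n Hermitian matrices, H₀ diagonal Hermitian, and H₁ Hermitian. Define ρₖ(t) = e^{−iH₀t}ρₖe^{iH₀t}. If Tr([−iH₁, ρ₁(t)]·ρ₂(t)) = 0 for all t ∈ ℝ, then Tr(Bₘ·[ρ₁,ρ₂]) = 0 for all m ≥ 0, where B₀ = −iH₁ and B_{m+1} = [−iH₀, Bₘ]. -/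
open Matrix

/-- Key analytic lemma: if `∑ c p * exp(I a p t) = 0` for all real `t`, then all
"moments" `∑ c p * (I a p)^m` vanish. -/
lemma exp_sum_zero_moments {ι : Type*} [Fintype ι] (c a : ι → ℂ)
    (h : ∀ t : ℝ, ∑ p, c p * Complex.exp (Complex.I * a p * t) = 0) :
    ∀ m : ℕ, ∑ p, c p * (Complex.I * a p) ^ m = 0 := by
  have aux : ∀ m : ℕ, ∀ t : ℝ,
      ∑ p, c p * (Complex.I * a p) ^ m * Complex.exp (Complex.I * a p * t) = 0 := by
    intro m
    induction m with
    | zero => intro t; simpa using h t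
    | succ m ih =>
      intro t
      have hd : HasDerivAt (fun s : ℝ =>
          ∑ p, c p * (Complex.I * a p) ^ m * Complex.exp (Complex.I * a p * s))
          (∑ p, c p * (Complex.I * a p) ^ (m+1) * Complex.exp (Complex.I * a p * t)) t := by
        apply HasDerivAt.fun_sum
        intro p _
        have h1 : HasDerivAt (fun s : ℝ => Complex.I * a p * (s : ℂ)) (Complex.I * a p) t := by
          simpa using (Complex.ofRealCLM.hasDerivAt (x := t)).const_mul (Complex.I * a p)
        have h3 := h1.cexp.const_mul (c p * (Complex.I * a p) ^ m)
        convert h3 using 1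
        · rfl
        · ring
      have h0 : HasDerivAt (fun _ : ℝ => (0 : ℂ))
          (∑ p, c p * (Complex.I * a p) ^ (m+1) * Complex.exp (Complex.I * a p * t)) t := by
        have : (fun s : ℝ =>
            ∑ p, c p * (Complex.I * a p) ^ m * Complex.exp (Complex.I * a p * s))
            = fun _ : ℝ => (0 : ℂ) := funext ih
        rwa [this] at hd
      exact h0.unique (hasDerivAt_const t 0)
  intro m
  have := aux m 0
  simpa using this

/-- The iterated adjoint brackets B₀ = −iH₁, B_{m+1} = [−iH₀, Bₘ]. -/
noncomputable def adB {n : ℕ} (H₀ H₁ : Matrix (Fin n) (Fin n) ℂ) : ℕ → Matrix (Fin n) (Fin n) ℂ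
  | 0 => (-Complex.I) • H₁
  | m + 1 => ((-Complex.I) • H₀) * adB H₀ H₁ m - adB H₀ H₁ m * ((-Complex.I) • H₀)

theorem stmt_5 {n : ℕ} (ρ₁ ρ₂ H₀ H₁ : Matrix (Fin n) (Fin n) ℂ)
    (hρ₁ : ρ₁.IsHermitian) (hρ₂ : ρ₂.IsHermitian)
    (hH₀ : H₀.IsHermitian) (hH₀d : H₀.IsDiag) (hH₁ : H₁.IsHermitian)
    (ρt₁ ρt₂ : ℝ → Matrix (Fin n) (Fin n) ℂ)
    (h₁ : ∀ t, ρt₁ t = NormedSpace.exp ((-(Complex.I * t)) • H₀) * ρ₁ *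
        NormedSpace.exp ((Complex.I * t) • H₀))
    (h₂ : ∀ t, ρt₂ t = NormedSpace.exp ((-(Complex.I * t)) • H₀) * ρ₂ *
        NormedSpace.exp ((Complex.I * t) • H₀))
    (hf : ∀ t : ℝ, ((((-Complex.I) • H₁) * ρt₁ t - ρt₁ t * ((-Complex.I) • H₁)) *
        ρt₂ t).trace = 0) :
    ∀ m : ℕ, (adB H₀ H₁ m * (ρ₁ * ρ₂ - ρ₂ * ρ₁)).trace = 0 := by
  classical
  set d : Fin n → ℂ := fun j => H₀ j j with hd
  have hdiag : H₀ = diagonal d := hH₀d.diagonal_diag.symm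
  have hexp : ∀ c : ℂ, NormedSpace.exp (c • H₀)
      = diagonal (fun j => Complex.exp (c * d j)) := by
    intro c
    rw [hdiag, ← diagonal_smul, Matrix.exp_diagonal]
    funext j
    rw [Pi.exp_def]
    simp [Complex.exp_eq_exp_ℂ]
  set B : Matrix (Fin n) (Fin n) ℂ := (-Complex.I) • H₁ with hB
  set C : Matrix (Fin n) (Fin n) ℂ := ρ₁ * ρ₂ - ρ₂ * ρ₁ with hC
  -- Step 1: the conjugated trace identity
  have key : ∀ t : ℝ, (NormedSpace.exp ((Complex.I * t) • H₀) * B *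
      NormedSpace.exp ((-(Complex.I * t)) • H₀) * C).trace = 0 := by
    intro t
    set U := NormedSpace.exp ((-(Complex.I * t)) • H₀) with hU
    set V := NormedSpace.exp ((Complex.I * t) • H₀) with hV
    have hVU : V * U = 1 := by
      rw [hU, hV, ← Matrix.exp_add_of_commute]
      · simp
      · exact (Commute.refl _).smul_left _ |>.smul_right _
    have h12 : (U * ρ₁ * V) * (U * ρ₂ * V) = U * (ρ₁ * ρ₂) * V := by
      simp only [mul_assoc]
      rw [show V * (U * (ρ₂ * V)) = ρ₂ * V by rw [← mul_assoc, hVU, one_mul]]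
    have h21 : (U * ρ₂ * V) * (U * ρ₁ * V) = U * (ρ₂ * ρ₁) * V := by
      simp only [mul_assoc]
      rw [show V * (U * (ρ₁ * V)) = ρ₁ * V by rw [← mul_assoc, hVU, one_mul]]
    have htr : ∀ X : Matrix (Fin n) (Fin n) ℂ,
        (B * (U * X * V)).trace = (V * B * U * X).trace := by
      intro X
      rw [show B * (U * X * V) = (B * (U * X)) * V from (mul_assoc _ _ _).symm,
        trace_mul_comm, ← mul_assoc, ← mul_assoc]
    have e1 : ((B * ρt₁ t - ρt₁ t * B) * ρt₂ t).trace = (V * B * U * C).trace := by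
      rw [h₁, h₂, ← hU, ← hV, sub_mul, trace_sub]
      rw [show B * (U * ρ₁ * V) * (U * ρ₂ * V) = B * (U * (ρ₁ * ρ₂) * V) by
        rw [mul_assoc B, h12]]
      rw [show (U * ρ₁ * V) * B * (U * ρ₂ * V)
          = (U * ρ₁ * V) * (B * (U * ρ₂ * V)) from mul_assoc _ _ _]
      rw [trace_mul_comm (U * ρ₁ * V)]
      rw [show B * (U * ρ₂ * V) * (U * ρ₁ * V) = B * (U * (ρ₂ * ρ₁) * V) by
        rw [mul_assoc B, h21]]
      rw [htr, htr, hC, mul_sub, trace_sub]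
    rw [← e1]
    exact hf t
  -- Step 2: write it entrywise as a sum of exponentials
  have key' : ∀ t : ℝ, ∑ p : Fin n × Fin n, (B p.1 p.2 * C p.2 p.1) *
      Complex.exp (Complex.I * (d p.1 - d p.2) * t) = 0 := by
    intro t
    have h0 := key t
    rw [hexp, hexp] at h0
    have tr_eq : ∀ X : Matrix (Fin n) (Fin n) ℂ,
        (X * C).trace = ∑ j, ∑ k, X j k * C k j := by
      intro X
      simp [Matrix.trace, Matrix.diag, Matrix.mul_apply]
    rw [tr_eq] at h0
    simp only [Matrix.mul_diagonal, Matrix.diagonal_mul] at h0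
    rw [Fintype.sum_prod_type]
    rw [← h0]
    refine Finset.sum_congr rfl fun j _ => Finset.sum_congr rfl fun k _ => ?_
    rw [show Complex.I * (d j - d k) * t
        = Complex.I * t * d j + -(Complex.I * t) * d k by ring, Complex.exp_add]
    ring
  have moments := exp_sum_zero_moments (fun p : Fin n × Fin n => B p.1 p.2 * C p.2 p.1)
    (fun p : Fin n × Fin n => d p.1 - d p.2) key'
  -- Step 3: entries of adB
  have hadB : ∀ m : ℕ, ∀ j k, adB H₀ H₁ m j k
      = (-(Complex.I * (d j - d k))) ^ m * B j k := by
    intro m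
    induction m with
    | zero => intro j k; simp [adB, hB]
    | succ m ih =>
      intro j k
      show (((-Complex.I) • H₀) * adB H₀ H₁ m - adB H₀ H₁ m * ((-Complex.I) • H₀)) j k = _
      rw [Matrix.sub_apply]
      have hsm : (-Complex.I) • H₀ = diagonal (fun j => -Complex.I * d j) := by
        rw [hdiag, ← diagonal_smul]
        congr 1
      rw [hsm, Matrix.diagonal_mul, Matrix.mul_diagonal, ih, pow_succ]
      ring
  -- Step 4: conclude
  intro m
  have expand2 : (adB H₀ H₁ m * C).trace = ∑ j, ∑ k, adB H₀ H₁ m j k * C k j := by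
    simp only [Matrix.trace, Matrix.diag, Matrix.mul_apply]
  rw [show ρ₁ * ρ₂ - ρ₂ * ρ₁ = C from hC.symm] at *
  rw [expand2]
  have final : ∑ j, ∑ k, adB H₀ H₁ m j k * C k j
      = (-1 : ℂ) ^ m * ∑ p : Fin n × Fin n,
          (B p.1 p.2 * C p.2 p.1) * (Complex.I * (d p.1 - d p.2)) ^ m := by
    rw [Fintype.sum_prod_type, Finset.mul_sum]
    refine Finset.sum_congr rfl fun j _ => ?_
    rw [Finset.mul_sum]
    refine Finset.sum_congr rfl fun k _ => ?_
    rw [hadB, show (-(Complex.I * (d j - d k)))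
        = (-1) * (Complex.I * (d j - d k)) by ring, mul_pow]
    ring
  rw [final, moments m, mul_zero]
end

section
/- Let H₀ = diag(a₁,…,aₙ) with ω_{kℓ} = a_ℓ − a_k, and let −iH₁ be a traceless anti-Hermitian matrix with off-diagonal entries b_{kℓ} ≠ 0 for all k ≠ ℓ. If H₀ is strongly regular (the |ω_{kℓ}| for k < ℓ are nonzero and pairwise distinct), then the span of {Bₘ = ad_{−iH₀}^m(−iH₁) : m ≥ 1} equals the space of traceless anti-Hermitian matrices with zero diagonal (i.e., has dimension n²−n over ℝ). -/
open Matrix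

lemma adB_apply {n : ℕ} (a : Fin n → ℝ) (H₁ : Matrix (Fin n) (Fin n) ℂ) (m : ℕ) (i j : Fin n) :
    adB (Matrix.diagonal (fun k => (a k : ℂ))) H₁ m i j
      = (-Complex.I * ((a i : ℂ) - a j)) ^ m * (-Complex.I * H₁ i j) := by
  induction m with
  | zero => simp [adB]
  | succ m ih =>
    show (((-Complex.I) • Matrix.diagonal (fun k => (a k : ℂ))) * adB _ H₁ m
        - adB _ H₁ m * ((-Complex.I) • Matrix.diagonal (fun k => (a k : ℂ)))) i j = _
    rw [Matrix.sub_apply, Matrix.smul_mul, Matrix.mul_smul, Matrix.smul_apply, Matrix.smul_apply,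
      Matrix.diagonal_mul, Matrix.mul_diagonal, ih, smul_eq_mul, smul_eq_mul, pow_succ]
    ring

theorem stmt_6 {n : ℕ} (a : Fin n → ℝ) (H₀ H₁ : Matrix (Fin n) (Fin n) ℂ)
    (hH₀ : H₀ = Matrix.diagonal (fun k => (a k : ℂ)))
    (hH₁ : H₁.IsHermitian) (hH₁tr : H₁.trace = 0)
    (hconn : ∀ k l : Fin n, k ≠ l → H₁ k l ≠ 0)
    (hreg₀ : ∀ k l : Fin n, k < l → a l - a k ≠ 0)
    (hreg : ∀ k l p q : Fin n, k < l → p < q →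
      |a l - a k| = |a q - a p| → k = p ∧ l = q) :
    (Submodule.span ℝ {X | ∃ m : ℕ, 1 ≤ m ∧ X = adB H₀ H₁ m} : Set (Matrix (Fin n) (Fin n) ℂ))
      = {X | Xᴴ = -X ∧ ∀ i, X i i = 0} := by
  subst hH₀
  set H₀ : Matrix (Fin n) (Fin n) ℂ := Matrix.diagonal (fun k => (a k : ℂ)) with hH₀
  set S : Submodule ℝ (Matrix (Fin n) (Fin n) ℂ) :=
    Submodule.span ℝ {X | ∃ m : ℕ, 1 ≤ m ∧ X = adB H₀ H₁ m} with hS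
  -- entry of Hermitian conjugate
  have hherm : ∀ i j : Fin n, (starRingEnd ℂ) (H₁ j i) = H₁ i j := by
    intro i j
    have := congrFun (congrFun hH₁ i) j
    rwa [Matrix.conjTranspose_apply] at this
  apply Set.eq_of_subset_of_subset
  · -- span ⊆ anti-Hermitian zero-diagonal
    intro X hX
    refine Submodule.span_induction ?_ ?_ ?_ ?_ hX
    · rintro Y ⟨m, hm, rfl⟩
      constructor
      · ext i j
        rw [Matrix.conjTranspose_apply, Matrix.neg_apply, adB_apply, adB_apply]
        rw [RCLike.star_def, _root_.map_mul, map_pow, _root_.map_mul, _root_.map_mul,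
          map_neg, Complex.conj_I, map_sub, Complex.conj_ofReal, Complex.conj_ofReal, hherm i j]
        ring
      · intro i
        rw [adB_apply, sub_self, mul_zero, zero_pow (by omega), zero_mul]
    · exact ⟨by simp, fun i => rfl⟩
    · rintro Y Z _ _ ⟨hY1, hY2⟩ ⟨hZ1, hZ2⟩
      exact ⟨by rw [Matrix.conjTranspose_add, hY1, hZ1, neg_add], fun i => by
        simp [Matrix.add_apply, hY2 i, hZ2 i]⟩
    · rintro c Y _ ⟨h1, h2⟩
      refine ⟨?_, fun i => by simp [Matrix.smul_apply, h2 i]⟩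
      rw [Matrix.conjTranspose_smul, h1, star_trivial, smul_neg]
  · -- anti-Hermitian zero-diagonal ⊆ span
    rintro X ⟨hX1, hX2⟩
    -- the basic 2-supported matrices
    set M : Fin n → Fin n → ℂ → Matrix (Fin n) (Fin n) ℂ := fun k l z =>
      Matrix.of (fun i j => if i = k ∧ j = l then z
        else if i = l ∧ j = k then -(starRingEnd ℂ) z else 0) with hMdef
    have hM : ∀ k l : Fin n, k < l → ∀ z : ℂ, M k l z ∈ S := by
      intro k l hkl z
      classical
      set xf : Fin n → Fin n → ℝ := fun i j => -((a i - a j) ^ 2) with hxf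
      set v : Option {p : Fin n × Fin n // p.1 < p.2} → ℝ :=
        fun o => Option.elim o 0 (fun p => xf p.1.1 p.1.2) with hv
      have hx0 : ∀ p : {p : Fin n × Fin n // p.1 < p.2}, xf p.1.1 p.1.2 ≠ 0 := by
        intro p hzero
        have hne := hreg₀ p.1.1 p.1.2 p.2
        rw [hxf] at hzero
        have hzero' : -(a p.1.1 - a p.1.2) ^ 2 = 0 := hzero
        have h2 : (a p.1.1 - a p.1.2) ^ 2 = 0 := by linarith
        have h3 : a p.1.1 - a p.1.2 = 0 :=
          (pow_eq_zero_iff (by norm_num : (2 : ℕ) ≠ 0)).mp h2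
        exact hne (by linarith)
      have hxinj : ∀ p q : {p : Fin n × Fin n // p.1 < p.2},
          xf p.1.1 p.1.2 = xf q.1.1 q.1.2 → p = q := by
        intro p q hpq
        rw [hxf] at hpq
        have h2 : (a p.1.2 - a p.1.1) ^ 2 = (a q.1.2 - a q.1.1) ^ 2 := by
          have := neg_injective hpq
          nlinarith [this]
        have habs : |a p.1.2 - a p.1.1| = |a q.1.2 - a q.1.1| :=
          (sq_eq_sq_iff_abs_eq_abs _ _).mp h2
        obtain ⟨h1, h2⟩ := hreg p.1.1 p.1.2 q.1.1 q.1.2 p.2 q.2 habs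
        exact Subtype.ext (Prod.ext_iff.mpr ⟨h1, h2⟩)
      have hvinj : Set.InjOn v (Finset.univ : Finset (Option {p : Fin n × Fin n // p.1 < p.2})) := by
        rintro (_ | p) - (_ | q) - hvo
        · rfl
        · exact absurd hvo.symm (hx0 q)
        · exact absurd hvo (hx0 p)
        · exact congrArg some (hxinj p q hvo)
      set p₀ : {p : Fin n × Fin n // p.1 < p.2} := ⟨(k, l), hkl⟩ with hp₀
      set r : Option {p : Fin n × Fin n // p.1 < p.2} → ℝ :=
        fun o => if o = some p₀ then 1 else 0 with hr
      set P : Polynomial ℝ := Lagrange.interpolate Finset.univ v r with hP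
      have hPnode : ∀ o, P.eval (v o) = r o := fun o =>
        Lagrange.eval_interpolate_at_node r hvinj (Finset.mem_univ o)
      have hP0 : P.coeff 0 = 0 := by
        rw [Polynomial.coeff_zero_eq_eval_zero]
        have h0 : P.eval 0 = r none := hPnode none
        rw [h0, hr]
        simp
      have hr_some : ∀ (i j : Fin n) (hij : i < j),
          r (some ⟨(i, j), hij⟩) = if i = k ∧ j = l then 1 else 0 := by
        intro i j hij
        rw [hr]
        simp only [Option.some.injEq, Subtype.mk.injEq, Prod.mk.injEq, hp₀]
      have hPval : ∀ i j : Fin n, P.eval (xf i j) =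
          if (i = k ∧ j = l) ∨ (i = l ∧ j = k) then 1 else 0 := by
        intro i j
        rcases lt_trichotomy i j with hij | hij | hij
        · have h2 : P.eval (xf i j) = r (some ⟨(i, j), hij⟩) := hPnode (some ⟨(i, j), hij⟩)
          rw [h2, hr_some i j hij]
          have hnot : ¬(i = l ∧ j = k) := by
            rintro ⟨rfl, rfl⟩
            exact lt_irrefl i (hij.trans hkl)
          by_cases hc : i = k ∧ j = l
          · rw [if_pos hc, if_pos (Or.inl hc)]
          · rw [if_neg hc, if_neg (by rintro (hd | hd); exacts [hc hd, hnot hd])]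
        · subst hij
          have hz : xf i i = 0 := by rw [hxf]; ring
          have h0 : P.eval 0 = r none := hPnode none
          have hrn : r none = 0 := by rw [hr]; simp
          have hcond : ¬((i = k ∧ i = l) ∨ (i = l ∧ i = k)) := by
            rintro (⟨h1, h2⟩ | ⟨h1, h2⟩) <;>
              · rw [← h1, ← h2] at hkl; exact lt_irrefl i hkl
          rw [hz, h0, hrn, if_neg hcond]
        · have hsymm : xf i j = xf j i := by rw [hxf]; ring
          have h2 : P.eval (xf i j) = r (some ⟨(j, i), hij⟩) := by
            rw [hsymm]; exact hPnode (some ⟨(j, i), hij⟩)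
          rw [h2, hr_some j i hij]
          have hnot : ¬(i = k ∧ j = l) := by
            rintro ⟨rfl, rfl⟩
            exact lt_irrefl i (hkl.trans hij)
          by_cases hc : j = k ∧ i = l
          · rw [if_pos hc, if_pos (Or.inr ⟨hc.2, hc.1⟩)]
          · rw [if_neg hc, if_neg (by rintro (hd | hd); exacts [hnot hd, hc ⟨hd.2, hd.1⟩])]
      set D := P.natDegree + 1 with hD
      set Ce : Matrix (Fin n) (Fin n) ℂ :=
        ∑ m ∈ Finset.range D, P.coeff m • adB H₀ H₁ (2 * m) with hCe
      set Co : Matrix (Fin n) (Fin n) ℂ :=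
        ∑ m ∈ Finset.range D, P.coeff m • adB H₀ H₁ (2 * m + 1) with hCo
      have hCeS : Ce ∈ S := by
        rw [hCe]
        refine Submodule.sum_mem S ?_
        intro m _
        rcases Nat.eq_zero_or_pos m with rfl | hm
        · rw [hP0, zero_smul]; exact S.zero_mem
        · exact Submodule.smul_mem S _ (Submodule.subset_span ⟨2 * m, by omega, rfl⟩)
      have hCoS : Co ∈ S := by
        rw [hCo]
        exact Submodule.sum_mem S fun m _ =>
          Submodule.smul_mem S _ (Submodule.subset_span ⟨2 * m + 1, by omega, rfl⟩)
      have hsq : ∀ i j : Fin n, (-Complex.I * ((a i : ℂ) - a j)) ^ 2 = ((xf i j : ℝ) : ℂ) := by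
        intro i j
        rw [mul_pow, neg_sq, Complex.I_sq, hxf]
        push_cast
        ring
      have hCe_apply : ∀ i j : Fin n,
          Ce i j = ((P.eval (xf i j) : ℝ) : ℂ) * (-Complex.I * H₁ i j) := by
        intro i j
        rw [hCe, Matrix.sum_apply, Polynomial.eval_eq_sum_range]
        push_cast
        rw [Finset.sum_mul]
        refine Finset.sum_congr rfl ?_
        intro m _
        rw [Matrix.smul_apply, adB_apply, pow_mul, hsq i j, Complex.real_smul]
        ring
      have hIsq : ∀ c d : ℂ, (-Complex.I * c) * (-Complex.I * d) = -(c * d) := by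
        intro c d
        have := Complex.I_sq
        linear_combination c * d * this
      have hCo_apply : ∀ i j : Fin n,
          Co i j = ((P.eval (xf i j) : ℝ) : ℂ) * (-(((a i : ℂ) - a j) * H₁ i j)) := by
        intro i j
        rw [hCo, Matrix.sum_apply, Polynomial.eval_eq_sum_range]
        push_cast
        rw [Finset.sum_mul]
        refine Finset.sum_congr rfl ?_
        intro m _
        rw [Matrix.smul_apply, adB_apply, pow_succ, pow_mul, hsq i j, mul_assoc,
          hIsq, Complex.real_smul]
        ring
      have hωne : (a l - a k : ℝ) ≠ 0 := hreg₀ k l hkl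
      have hhne : H₁ k l ≠ 0 := hconn k l (ne_of_lt hkl)
      have hA : ((a l : ℂ) - (a k : ℂ)) ≠ 0 := by
        rw [← Complex.ofReal_sub]
        exact Complex.ofReal_ne_zero.mpr hωne
      obtain ⟨t, s, hst⟩ : ∃ t s : ℝ, z = -(H₁ k l * ((t : ℂ) + (s : ℂ) * Complex.I)) := by
        refine ⟨(-z / H₁ k l).re, (-z / H₁ k l).im, ?_⟩
        rw [Complex.re_add_im]
        field_simp
      have hstc : (starRingEnd ℂ) z
          = -((starRingEnd ℂ) (H₁ k l) * ((t : ℂ) - (s : ℂ) * Complex.I)) := by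
        rw [hst, map_neg, _root_.map_mul, map_add, _root_.map_mul, Complex.conj_ofReal,
          Complex.conj_ofReal, Complex.conj_I]
        ring
      have hM_eq : M k l z = s • Ce + (t * -((a l - a k)⁻¹)) • Co := by
        ext i j
        rw [Matrix.add_apply, Matrix.smul_apply, Matrix.smul_apply, hCe_apply, hCo_apply,
          hPval i j]
        simp only [hMdef, Matrix.of_apply]
        by_cases h1 : i = k ∧ j = l
        · obtain ⟨rfl, rfl⟩ := h1
          rw [if_pos ⟨rfl, rfl⟩, if_pos (Or.inl ⟨rfl, rfl⟩), hst]
          simp only [Complex.real_smul]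
          push_cast
          field_simp
          ring
        · by_cases h2 : i = l ∧ j = k
          · obtain ⟨rfl, rfl⟩ := h2
            rw [if_neg h1, if_pos ⟨rfl, rfl⟩, if_pos (Or.inr ⟨rfl, rfl⟩), ← hherm i j, hstc]
            simp only [Complex.real_smul]
            push_cast
            field_simp
            ring
          · rw [if_neg h1, if_neg h2, if_neg (by rintro (hd | hd); exacts [h1 hd, h2 hd])]
            simp
      rw [hM_eq]
      exact Submodule.add_mem S (Submodule.smul_mem S _ hCeS) (Submodule.smul_mem S _ hCoS)
    -- decomposition of X
    have hdec : X = ∑ p ∈ Finset.univ.filter (fun p : Fin n × Fin n => p.1 < p.2),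
        M p.1 p.2 (X p.1 p.2) := by
      ext i j
      rw [Matrix.sum_apply]
      rcases lt_trichotomy i j with hij | hij | hij
      · rw [Finset.sum_eq_single (i, j)]
        · simp [hMdef]
        · rintro p hp hne
          simp only [hMdef, Matrix.of_apply]
          rw [if_neg, if_neg]
          · rintro ⟨h1, h2⟩
            have := (Finset.mem_filter.mp hp).2
            rw [← h2, ← h1] at this
            exact absurd (lt_trans hij this) (lt_irrefl i)
          · rintro ⟨h1, h2⟩
            exact hne (by rw [Prod.ext_iff]; exact ⟨h1.symm, h2.symm⟩)
        · intro habs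
          exact absurd (Finset.mem_filter.mpr ⟨Finset.mem_univ ((i, j) : Fin n × Fin n), hij⟩) habs
      · subst hij
        rw [hX2 i]
        refine (Finset.sum_eq_zero ?_).symm
        intro p hp
        simp only [hMdef, Matrix.of_apply]
        rw [if_neg, if_neg]
        · rintro ⟨h1, h2⟩
          have := (Finset.mem_filter.mp hp).2
          rw [← h1, ← h2] at this
          exact lt_irrefl i this
        · rintro ⟨h1, h2⟩
          have := (Finset.mem_filter.mp hp).2
          rw [← h1, ← h2] at this
          exact lt_irrefl i this
      · rw [Finset.sum_eq_single (j, i)]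
        · have hne : ¬(i = j ∧ j = i) := by
            rintro ⟨h1, -⟩; rw [h1] at hij; exact lt_irrefl j hij
          simp only [hMdef, Matrix.of_apply]
          rw [if_neg hne]
          simp only [and_self, if_true]
          have := congrFun (congrFun hX1 i) j
          rw [Matrix.conjTranspose_apply, Matrix.neg_apply] at this
          rw [show (starRingEnd ℂ) (X j i) = star (X j i) from rfl, this, neg_neg]
        · rintro p hp hne
          simp only [hMdef, Matrix.of_apply]
          rw [if_neg, if_neg]
          · rintro ⟨h1, h2⟩
            exact hne (by rw [Prod.ext_iff]; exact ⟨h2.symm, h1.symm⟩)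
          · rintro ⟨h1, h2⟩
            have := (Finset.mem_filter.mp hp).2
            rw [← h1, ← h2] at this
            exact absurd (lt_trans hij this) (lt_irrefl j)
        · intro habs
          exact absurd (Finset.mem_filter.mpr ⟨Finset.mem_univ ((j, i) : Fin n × Fin n), hij⟩) habs
    rw [hdec]
    exact Submodule.sum_mem S (fun p hp => hM p.1 p.2 (Finset.mem_filter.mp hp).2 _)
end

section
/- Let ρ_d be an n×n Hermitian matrix. If U₀ ∈ SU(n) is a critical point of the function J(U) = Tr(Uρ_dU†ρ_d) on SU(n), then ρ₀ = U₀ρ_dU₀† commutes with ρ_d: [ρ₀, ρ_d] = 0. -/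
open Matrix

theorem stmt_8 {n : ℕ} (ρd U₀ : Matrix (Fin n) (Fin n) ℂ)
    (hρd : ρd.IsHermitian)
    (hU₀ : U₀ ∈ Matrix.unitaryGroup (Fin n) ℂ) (hdet : U₀.det = 1)
    (hcrit : ∀ σ : Matrix (Fin n) (Fin n) ℂ, σᴴ = -σ → σ.trace = 0 →
      deriv (fun s : ℝ =>
        ((NormedSpace.exp (s • σ) * U₀) * ρd * (NormedSpace.exp (s • σ) * U₀)ᴴ
          * ρd).trace) 0 = 0) :
    (U₀ * ρd * U₀ᴴ) * ρd = ρd * (U₀ * ρd * U₀ᴴ) := by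
  classical
  letI : SeminormedRing (Matrix (Fin n) (Fin n) ℂ) := Matrix.linftyOpSemiNormedRing
  letI : NormedRing (Matrix (Fin n) (Fin n) ℂ) := Matrix.linftyOpNormedRing
  letI : NormedAlgebra ℝ (Matrix (Fin n) (Fin n) ℂ) := Matrix.linftyOpNormedAlgebra
  set ρ₀ := U₀ * ρd * U₀ᴴ with hρ₀
  have hρ₀herm : ρ₀ᴴ = ρ₀ := by
    simp [hρ₀, conjTranspose_mul, hρd.eq, mul_assoc]
  set K := ρ₀ * ρd - ρd * ρ₀ with hK
  have hKanti : Kᴴ = -K := by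
    simp [hK, conjTranspose_mul, hρd.eq, hρ₀herm]
  have hKtr : K.trace = 0 := by
    simp [hK, trace_sub, trace_mul_comm ρ₀ ρd]
  -- derivative computation
  have key : ∀ σ : Matrix (Fin n) (Fin n) ℂ, σᴴ = -σ →
      deriv (fun s : ℝ =>
        ((NormedSpace.exp (s • σ) * U₀) * ρd * (NormedSpace.exp (s • σ) * U₀)ᴴ
          * ρd).trace) 0 = (σ * K).trace := by
    intro σ hσ
    have hE : HasDerivAt (fun s : ℝ => NormedSpace.exp (s • σ)) σ 0 := by
      have := hasDerivAt_exp_smul_const (𝕂 := ℝ) σ (0 : ℝ)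
      simp at this; exact this
    have hE' : HasDerivAt (fun s : ℝ => NormedSpace.exp (s • (-σ))) (-σ) 0 := by
      have := hasDerivAt_exp_smul_const (𝕂 := ℝ) (-σ) (0 : ℝ)
      simp at this ⊢; exact this
    have hconj : ∀ s : ℝ, (NormedSpace.exp (s • σ))ᴴ = NormedSpace.exp (s • (-σ)) := by
      intro s
      rw [← Matrix.exp_conjTranspose]
      congr 1
      rw [conjTranspose_smul, hσ]
      simp
    have hfun : (fun s : ℝ =>
        ((NormedSpace.exp (s • σ) * U₀) * ρd * (NormedSpace.exp (s • σ) * U₀)ᴴ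
          * ρd).trace)
        = fun s : ℝ =>
        ((NormedSpace.exp (s • σ) * ρ₀ * NormedSpace.exp (s • (-σ))) * ρd).trace := by
      funext s
      rw [conjTranspose_mul, hconj]
      rw [hρ₀]
      noncomm_ring
    rw [hfun]
    have h1 : HasDerivAt (fun s : ℝ => NormedSpace.exp (s • σ) * ρ₀) (σ * ρ₀) 0 :=
      hE.mul_const ρ₀
    have h2 : HasDerivAt
        (fun s : ℝ => NormedSpace.exp (s • σ) * ρ₀ * NormedSpace.exp (s • (-σ)))
        (σ * ρ₀ - ρ₀ * σ) 0 := by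
      have := h1.mul hE'
      simp [NormedSpace.exp_zero, mul_neg, sub_eq_add_neg] at this ⊢; exact this
    have h3 : HasDerivAt
        (fun s : ℝ => NormedSpace.exp (s • σ) * ρ₀ * NormedSpace.exp (s • (-σ)) * ρd)
        ((σ * ρ₀ - ρ₀ * σ) * ρd) 0 := h2.mul_const ρd
    have h4 : HasDerivAt
        (fun s : ℝ =>
          ((NormedSpace.exp (s • σ) * ρ₀ * NormedSpace.exp (s • (-σ))) * ρd).trace)
        (((σ * ρ₀ - ρ₀ * σ) * ρd).trace) 0 := by
      have htrCLM : Continuous (Matrix.trace : Matrix (Fin n) (Fin n) ℂ → ℂ) := by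
        exact LinearMap.continuous_of_finiteDimensional (Matrix.traceLinearMap (Fin n) ℂ ℂ)
      exact (((Matrix.traceLinearMap (Fin n) ℂ ℂ).restrictScalars ℝ).toContinuousLinearMap.hasFDerivAt.comp_hasDerivAt 0 h3)
    rw [h4.deriv, hK, Matrix.sub_mul, Matrix.mul_sub, trace_sub, trace_sub]
    congr 1
    · rw [mul_assoc]
    · rw [mul_assoc, trace_mul_comm, mul_assoc]
  have htr : (K * K).trace = 0 := by
    have := hcrit K hKanti hKtr
    rw [key K hKanti] at this
    exact this
  have htr2 : (Kᴴ * K).trace = 0 := by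
    rw [hKanti]; simpa using htr
  -- conclude K = 0
  have hK0 : K = 0 := by
    have hsum : ∑ j, ∑ i, Complex.normSq (K i j) = 0 := by
      have := congrArg Complex.re htr2
      simp only [Matrix.trace, Matrix.diag, Matrix.mul_apply, conjTranspose_apply,
        Complex.zero_re] at this
      rw [← this]
      rw [Complex.re_sum]
      refine Finset.sum_congr rfl fun j _ => ?_
      rw [Complex.re_sum]
      refine Finset.sum_congr rfl fun i _ => ?_
      rw [Complex.normSq_apply]
      simp [Complex.mul_re, Complex.conj_re, Complex.conj_im]
    ext i j
    have h1 : ∀ j ∈ Finset.univ, ∀ i ∈ Finset.univ, (0:ℝ) ≤ Complex.normSq (K i j) := by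
      intro _ _ _ _; exact Complex.normSq_nonneg _
    have := (Finset.sum_eq_zero_iff_of_nonneg (fun j _ =>
      Finset.sum_nonneg (fun i _ => Complex.normSq_nonneg (K i j)))).mp hsum j (Finset.mem_univ j)
    have := (Finset.sum_eq_zero_iff_of_nonneg (fun i _ =>
      Complex.normSq_nonneg (K i j))).mp this i (Finset.mem_univ i)
    simpa [Complex.normSq_eq_zero] using this
  have : ρ₀ * ρd - ρd * ρ₀ = 0 := by rw [← hK]; exact hK0
  rw [hρ₀] at this
  exact sub_eq_zero.mp this
end

section
/- Let ρ_d = diag(w₁,…,wₙ) with pairwise distinct w_k, and let ρ₀ = diag(w_{τ(1)},…,w_{τ(n)}) for a permutation τ that is neither the identity nor order-reversing (when w sorted decreasingly). Then there exists a transposition swapping two diagonal entries of ρ₀ that strictly increases Tr(ρ₀ρ_d), and another that strictly decreases it; hence ρ₀ is neither a local maximum nor a local minimum of ρ ↦ Tr(ρρ_d) on the isospectral set. -/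
open Matrix Equiv

lemma sum_swap_eq {n : ℕ} (w : Fin n → ℝ) (τ : Equiv.Perm (Fin n)) {k l : Fin n}
    (hkl : k ≠ l) :
    ∑ j, w j * w (τ (Equiv.swap k l j)) =
      (∑ j, w j * w (τ j)) + (w k - w l) * (w (τ l) - w (τ k)) := by
  have h : ∑ j, (w j * w (τ (Equiv.swap k l j)) - w j * w (τ j)) =
      ∑ j ∈ ({k, l} : Finset (Fin n)), (w j * w (τ (Equiv.swap k l j)) - w j * w (τ j)) := by
    refine (Finset.sum_subset (Finset.subset_univ _) ?_).symm
    intro j _ hj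
    simp only [Finset.mem_insert, Finset.mem_singleton, not_or] at hj
    rw [Equiv.swap_apply_of_ne_of_ne hj.1 hj.2, sub_self]
  rw [Finset.sum_sub_distrib] at h
  have h2 : ∑ j ∈ ({k, l} : Finset (Fin n)), (w j * w (τ (Equiv.swap k l j)) - w j * w (τ j)) =
      (w k * w (τ (Equiv.swap k l k)) - w k * w (τ k)) +
      (w l * w (τ (Equiv.swap k l l)) - w l * w (τ l)) := Finset.sum_pair hkl
  rw [h2, Equiv.swap_apply_left, Equiv.swap_apply_right] at h
  linarith [h]

lemma exists_inversion {n : ℕ} (τ : Equiv.Perm (Fin n)) (hid : τ ≠ Equiv.refl (Fin n)) :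
    ∃ k l : Fin n, k < l ∧ τ l < τ k := by
  by_contra h
  push_neg at h
  have hmono : StrictMono τ := by
    intro a b hab
    exact lt_of_le_of_ne (h a b hab) (fun he => absurd (τ.injective he) hab.ne)
  have : (τ : Fin n → Fin n) = id := by
    apply (hmono.range_inj strictMono_id).mp
    rw [Set.range_id]
    exact Set.range_eq_univ.mpr τ.surjective
  exact hid (Equiv.ext fun x => congrFun this x)

lemma exists_noninversion {n : ℕ} (τ : Equiv.Perm (Fin n)) (hrev : τ ≠ Fin.revPerm) :
    ∃ k l : Fin n, k < l ∧ τ k < τ l := by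
  by_contra h
  push_neg at h
  have hanti : StrictAnti τ := by
    intro a b hab
    exact lt_of_le_of_ne (h a b hab) (fun he => absurd (τ.injective he.symm) hab.ne)
  have hmono : StrictMono (fun i => τ (Fin.rev i)) := by
    intro a b hab
    exact hanti (Fin.rev_lt_rev.mpr hab)
  have : (fun i => τ (Fin.rev i)) = id := by
    apply (hmono.range_inj strictMono_id).mp
    rw [Set.range_id]
    apply Set.range_eq_univ.mpr
    intro y
    exact ⟨Fin.rev (τ.symm y), by simp⟩
  refine hrev (Equiv.ext fun x => ?_)
  have := congrFun this (Fin.rev x)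
  simp only [Fin.rev_rev, id_eq] at this
  simp [this]

theorem stmt_11 {n : ℕ} (w : Fin n → ℝ) (hw : StrictAnti w)
    (τ : Equiv.Perm (Fin n)) (hid : τ ≠ Equiv.refl (Fin n)) (hrev : τ ≠ Fin.revPerm) :
    (∃ k l : Fin n, k ≠ l ∧ (w k - w l) * (w (τ l) - w (τ k)) > 0 ∧
        ∑ j, w j * w (τ (Equiv.swap k l j)) > ∑ j, w j * w (τ j)) ∧
    (∃ k l : Fin n, k ≠ l ∧ (w k - w l) * (w (τ l) - w (τ k)) < 0 ∧
        ∑ j, w j * w (τ (Equiv.swap k l j)) < ∑ j, w j * w (τ j)) := by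
  constructor
  · obtain ⟨k, l, hkl, hτ⟩ := exists_inversion τ hid
    have h1 : w k - w l > 0 := sub_pos.mpr (hw hkl)
    have h2 : w (τ l) - w (τ k) > 0 := sub_pos.mpr (hw hτ)
    have hpos : (w k - w l) * (w (τ l) - w (τ k)) > 0 := mul_pos h1 h2
    refine ⟨k, l, hkl.ne, hpos, ?_⟩
    rw [sum_swap_eq w τ hkl.ne]
    linarith
  · obtain ⟨k, l, hkl, hτ⟩ := exists_noninversion τ hrev
    have h1 : w k - w l > 0 := sub_pos.mpr (hw hkl)
    have h2 : w (τ l) - w (τ k) < 0 := sub_neg.mpr (hw hτ)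
    have hneg : (w k - w l) * (w (τ l) - w (τ k)) < 0 := mul_neg_of_pos_of_neg h1 h2
    refine ⟨k, l, hkl.ne, hneg, ?_⟩
    rw [sum_swap_eq w τ hkl.ne]
    linarith
end

section
/- For a permutation τ of {1,…,n} and pairwise distinct reals w₁>…>wₙ, the Hessian of J(x) = Tr(e^{x·σ} ρ₀ e^{−x·σ} ρ_d) at x = 0, restricted to the directions σ ∈ {λ_{kℓ}, λ̄_{kℓ}}, is diagonal with the entry in direction λ_{kℓ} (and λ̄_{kℓ}) equal to 2(w_{τ(k)} − w_{τ(ℓ)})(w_ℓ − w_k), which is nonzero; hence all n! critical points are nondegenerate on the flag manifold. -/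
open Matrix

/-- The su(n) generators λ_{kℓ} = i(e_{kℓ} + e_{ℓk}). -/
noncomputable def lam {n : ℕ} (k l : Fin n) : Matrix (Fin n) (Fin n) ℂ :=
  Complex.I • (Matrix.single k l 1 + Matrix.single l k 1)

/-- The su(n) generators λ̄_{kℓ} = e_{kℓ} − e_{ℓk}. -/
noncomputable def lamBar {n : ℕ} (k l : Fin n) : Matrix (Fin n) (Fin n) ℂ :=
  Matrix.single k l 1 - Matrix.single l k 1

lemma sbm_mul_diag {n : ℕ} (a b : Fin n) (c : ℂ) (f : Fin n → ℂ) :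
    Matrix.single a b c * Matrix.diagonal f = Matrix.single a b (c * f b) := by
  ext i j
  by_cases hj : j = b
  · subst hj
    simp [Matrix.mul_apply, Matrix.single, Matrix.diagonal, Finset.sum_ite_eq,
      mul_comm, and_comm]
  · simp [Matrix.mul_apply, Matrix.single, Matrix.diagonal, hj, Ne.symm hj,
      Finset.sum_ite_eq, mul_comm, and_comm]

lemma sbm_neg {n : ℕ} (a b : Fin n) (c : ℂ) :
    Matrix.single a b (-c) = -(Matrix.single a b c) := by
  ext i j
  by_cases h : a = i ∧ b = j <;> simp [Matrix.single, h]

lemma key {n : ℕ} (k l : Fin n) (f g : Fin n → ℂ)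
    (A : Matrix (Fin n) (Fin n) ℂ)
    (h1 : A * A = -(Matrix.single k k (1:ℂ) + Matrix.single l l 1))
    (h2 : A * Matrix.diagonal g * A
        = -(Matrix.single k k (g l) + Matrix.single l l (g k))) :
    2 * ((A * A * Matrix.diagonal g * Matrix.diagonal f).trace
        - (A * Matrix.diagonal g * A * Matrix.diagonal f).trace)
      = 2 * (g k - g l) * (f l - f k) := by
  rw [h1, h2]
  simp [Matrix.neg_mul, Matrix.add_mul, sbm_mul_diag, Matrix.trace_add, Matrix.trace_neg,
    Matrix.trace_single_eq_same]
  ring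

lemma lam_sq {n : ℕ} (k l : Fin n) (hkl : k ≠ l) :
    lam k l * lam k l = -(Matrix.single k k (1:ℂ) + Matrix.single l l 1) := by
  simp only [lam, Matrix.smul_mul, Matrix.mul_smul, smul_smul, Complex.I_mul_I,
    Matrix.add_mul, Matrix.mul_add,
    Matrix.single_mul_single_same, Matrix.single_mul_single_of_ne _ _ _ _ hkl,
    Matrix.single_mul_single_of_ne _ _ _ _ hkl.symm, mul_one]
  simp only [zero_add, add_zero, ← smul_add, smul_smul, Complex.I_mul_I, neg_smul, one_smul]
  abel

lemma lam_conj {n : ℕ} (k l : Fin n) (hkl : k ≠ l) (g : Fin n → ℂ) :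
    lam k l * Matrix.diagonal g * lam k l
      = -(Matrix.single k k (g l) + Matrix.single l l (g k)) := by
  simp only [lam, Matrix.smul_mul, Matrix.mul_smul, smul_smul, Complex.I_mul_I,
    Matrix.add_mul, Matrix.mul_add, sbm_mul_diag, one_mul,
    Matrix.single_mul_single_same, Matrix.single_mul_single_of_ne _ _ _ _ hkl,
    Matrix.single_mul_single_of_ne _ _ _ _ hkl.symm, mul_one]
  simp only [zero_add, add_zero, ← smul_add, smul_smul, Complex.I_mul_I, neg_smul, one_smul]
  abel

lemma lamBar_sq {n : ℕ} (k l : Fin n) (hkl : k ≠ l) :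
    lamBar k l * lamBar k l = -(Matrix.single k k (1:ℂ) + Matrix.single l l 1) := by
  simp only [lamBar, Matrix.sub_mul, Matrix.mul_sub,
    Matrix.single_mul_single_same, Matrix.single_mul_single_of_ne _ _ _ _ hkl,
    Matrix.single_mul_single_of_ne _ _ _ _ hkl.symm, mul_one]
  abel

lemma lamBar_conj {n : ℕ} (k l : Fin n) (hkl : k ≠ l) (g : Fin n → ℂ) :
    lamBar k l * Matrix.diagonal g * lamBar k l
      = -(Matrix.single k k (g l) + Matrix.single l l (g k)) := by
  simp only [lamBar, Matrix.sub_mul, Matrix.mul_sub, sbm_mul_diag, one_mul,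
    Matrix.single_mul_single_same, Matrix.single_mul_single_of_ne _ _ _ _ hkl,
    Matrix.single_mul_single_of_ne _ _ _ _ hkl.symm, mul_one]
  abel

theorem stmt_12 {n : ℕ} (w : Fin n → ℝ) (hw : StrictAnti w)
    (τ : Equiv.Perm (Fin n))
    (ρd ρ₀ : Matrix (Fin n) (Fin n) ℂ)
    (hρd : ρd = Matrix.diagonal (fun k => (w k : ℂ)))
    (hρ₀ : ρ₀ = Matrix.diagonal (fun k => (w (τ k) : ℂ)))
    (k l : Fin n) (hkl : k ≠ l) :
    (2 * ((lam k l * lam k l * ρ₀ * ρd).trace - (lam k l * ρ₀ * lam k l * ρd).trace)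
        = ((2 * (w (τ k) - w (τ l)) * (w l - w k) : ℝ) : ℂ)) ∧
    (2 * ((lamBar k l * lamBar k l * ρ₀ * ρd).trace
          - (lamBar k l * ρ₀ * lamBar k l * ρd).trace)
        = ((2 * (w (τ k) - w (τ l)) * (w l - w k) : ℝ) : ℂ)) ∧
    (2 * (w (τ k) - w (τ l)) * (w l - w k) : ℝ) ≠ 0 := by
  subst hρd hρ₀
  refine ⟨?_, ?_, ?_⟩
  · rw [key k l _ _ _ (lam_sq k l hkl) (lam_conj k l hkl _)]
    push_cast; ring
  · rw [key k l _ _ _ (lamBar_sq k l hkl) (lamBar_conj k l hkl _)]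
    push_cast; ring
  · have h1 : w (τ k) - w (τ l) ≠ 0 := sub_ne_zero.mpr (fun h => hkl (τ.injective (hw.injective h)))
    have h2 : w l - w k ≠ 0 := sub_ne_zero.mpr (fun h => hkl (hw.injective h).symm)
    exact mul_ne_zero (mul_ne_zero two_ne_zero h1) h2
end

section
/- Let B₀ be as above (invertible, block-diagonal with blocks ω_j·[[0,1],[−1,0]], ω_j real nonzero), u, v ∈ ℝᴺ with block components u_j = c_j(Im b_j, Re b_j)ᵀ, v_j = (Im b_j, Re b_j)ᵀ, c_j real. If iβ (β real) is an eigenvalue of B = B₀ − uvᵀ and iβ is not an eigenvalue of B₀ (i.e., β² ≠ ω_j² for all j), then a contradiction arises: 1 = vᵀ(B₀ − iβI)⁻¹u, but vᵀ(B₀−iβI)⁻¹u = (−iβ/1)·Σ_j c_j|b_j|²/(ω_j²−β²) is purely imaginary. Hence every purely imaginary eigenvalue of B is an eigenvalue of B₀. -/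
open Matrix

theorem stmt_17 {m : ℕ} (ω c : Fin m → ℝ) (b : Fin m → ℂ)
    (hω : ∀ j, ω j ≠ 0)
    (B₀ : Matrix (Fin m × Fin 2) (Fin m × Fin 2) ℂ)
    (hB₀ : B₀ = Matrix.of fun p q =>
      if p.1 = q.1 then (ω p.1 : ℂ) * (!![0, 1; -1, 0] p.2 q.2) else 0)
    (u v : Fin m × Fin 2 → ℂ)
    (hu : u = fun p => (c p.1 : ℂ) * (![((b p.1).im : ℂ), ((b p.1).re : ℂ)] p.2))
    (hv : v = fun p => ![((b p.1).im : ℂ), ((b p.1).re : ℂ)] p.2)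
    (β : ℝ)
    (heig : ∃ x : Fin m × Fin 2 → ℂ, x ≠ 0 ∧
      (B₀ - Matrix.vecMulVec u v) *ᵥ x = (Complex.I * β) • x) :
    ∃ j, β ^ 2 = ω j ^ 2 := by

  by_contra h
  push_neg at h
  obtain ⟨x, hx0, hx⟩ := heig
  set s : ℂ := v ⬝ᵥ x with hs
  have hd : ∀ j : Fin m, ((β:ℂ)^2 - (ω j:ℂ)^2) ≠ 0 := by
    intro j hj
    apply h j
    have : ((β^2 : ℝ) : ℂ) = ((ω j ^2 : ℝ) : ℂ) := by push_cast; linear_combination hj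
    exact_mod_cast this
  have hx' : ∀ p, (B₀ *ᵥ x) p - u p * s = Complex.I * β * x p := by
    intro p
    have := congrFun hx p
    simpa [sub_mulVec, vecMulVec, mulVec, dotProduct, sub_mul, Finset.sum_sub_distrib,
      Finset.mul_sum, mul_assoc, hs] using this
  have e1 : ∀ j : Fin m, (ω j : ℂ) * x (j,1) - (c j : ℂ) * ((b j).im : ℂ) * s
      = Complex.I * β * x (j,0) := by
    intro j
    have := hx' (j,0)
    simpa [hB₀, hu, mulVec, dotProduct, Fintype.sum_prod_type, Fin.sum_univ_two, ite_mul,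
      Finset.sum_ite_eq] using this
  have e2 : ∀ j : Fin m, -(ω j : ℂ) * x (j,0) - (c j : ℂ) * ((b j).re : ℂ) * s
      = Complex.I * β * x (j,1) := by
    intro j
    have := hx' (j,1)
    simpa [hB₀, hu, mulVec, dotProduct, Fintype.sum_prod_type, Fin.sum_univ_two, ite_mul,
      Finset.sum_ite_eq] using this
  have key0 : ∀ j : Fin m, x (j,0) =
      s * c j * ((ω j) * ((b j).re:ℂ) + Complex.I*β*((b j).im:ℂ)) / ((β:ℂ)^2 - (ω j:ℂ)^2) := by
    intro j
    rw [eq_div_iff (hd j)]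
    linear_combination (Complex.I * β) * e1 j + (ω j : ℂ) * e2 j
      + (β:ℂ)^2 * x (j,0) * Complex.I_sq
  have key1 : ∀ j : Fin m, x (j,1) =
      s * c j * (Complex.I*β*((b j).re:ℂ) - (ω j) * ((b j).im:ℂ)) / ((β:ℂ)^2 - (ω j:ℂ)^2) := by
    intro j
    rw [eq_div_iff (hd j)]
    linear_combination (Complex.I * β) * e2 j - (ω j : ℂ) * e1 j
      + (β:ℂ)^2 * x (j,1) * Complex.I_sq
  set T : ℝ := ∑ j, c j * Complex.normSq (b j) / (β^2 - ω j^2) with hT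
  have hsum : s = s * (Complex.I*β) * (T:ℂ) := by
    calc s = ∑ j, (((b j).im:ℂ) * x (j,0) + ((b j).re:ℂ) * x (j,1)) := by
            simp [hs, hv, dotProduct, Fintype.sum_prod_type, Fin.sum_univ_two]
    _ = ∑ j, s * (Complex.I*β) * ((c j * Complex.normSq (b j) / (β^2 - ω j^2) : ℝ):ℂ) := by
          refine Finset.sum_congr rfl fun j _ => ?_
          rw [key0 j, key1 j]
          have hd' := hd j
          push_cast [Complex.normSq_apply]
          field_simp
          ring
    _ = s * (Complex.I*β) * (T:ℂ) := by
          rw [← Finset.mul_sum, hT]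
          push_cast
          ring
  have hzero : s * (1 - Complex.I*β*(T:ℂ)) = 0 := by linear_combination hsum
  have hne : (1 : ℂ) - Complex.I*β*(T:ℂ) ≠ 0 := by
    intro h0
    have := congrArg Complex.re h0
    simp at this
  have hs0 : s = 0 := by
    rcases mul_eq_zero.mp hzero with h' | h'
    · exact h'
    · exact absurd h' hne
  apply hx0
  funext p
  obtain ⟨j, i⟩ := p
  fin_cases i <;> simp [key0 j, key1 j, hs0]
end
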